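/- Let T be a tree multipole with Tait coloring set nonempty, and let ε_1, ε_2, ε_3 be three distinct semiedges with incident vertices v_1, v_2, v_3. If v_1 ≠ v_3 and it is not the case that d(v_1,v_2) = d(v_2,v_3) = 1, then for any two distinct colors a, b there is a Tait coloring of T giving ε_1, ε_2, ε_3 the colors a, b, a respectively. -/

import Mathlib

open SimpleGraph Walk Sum

section TreeBasics
variable {V : Type} {G : SimpleGraph V}

lemma tree_unique_path (hT : G.IsTree) {u v : V} {p q : G.Walk u v}
    (hp : p.IsPath) (hq : q.IsPath) : p = q := by
  obtain ⟨w, -, hw⟩ := hT.existsUnique_path u v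
  rw [hw p hp, hw q hq]

lemma tree_path_length (hT : G.IsTree) {u v : V} {p : G.Walk u v} (hp : p.IsPath) :
    p.length = G.dist u v := by
  obtain ⟨q, hq, hl⟩ := hT.isConnected.exists_path_of_dist u v
  rw [tree_unique_path hT hp hq, hl]

lemma tree_dist_add_of_mem_support (hT : G.IsTree) {u v x : V} {p : G.Walk u v}
    (hp : p.IsPath) (hx : x ∈ p.support) :
    G.dist u x + G.dist x v = G.dist u v := by
  classical
  have h1 := hp.takeUntil hx
  have h2 := hp.dropUntil hx
  have hlen := congrArg Walk.length (p.take_spec hx)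
  rw [Walk.length_append] at hlen
  rw [← tree_path_length hT hp, ← tree_path_length hT h1, ← tree_path_length hT h2, hlen]

lemma tree_mem_support_of_dist_add (hT : G.IsTree) {u v x : V} {p : G.Walk u v}
    (hp : p.IsPath) (h : G.dist u x + G.dist x v = G.dist u v) : x ∈ p.support := by
  classical
  obtain ⟨p1, hp1, hl1⟩ := hT.isConnected.exists_path_of_dist u x
  obtain ⟨p2, hp2, hl2⟩ := hT.isConnected.exists_path_of_dist x v
  have key : (p1.append p2).IsPath := by
    rw [Walk.isPath_def, Walk.support_append]
    refine List.Nodup.append hp1.support_nodup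
      (hp2.support_nodup.sublist (List.tail_sublist _)) ?_
    intro y hy1 hy2
    have hy2' : y ∈ p2.support := List.mem_of_mem_tail hy2
    have e1 := tree_dist_add_of_mem_support hT hp1 hy1
    have e2 := tree_dist_add_of_mem_support hT hp2 hy2'
    have tri : G.dist u v ≤ G.dist u y + G.dist y v := hT.isConnected.dist_triangle
    have hc : G.dist y x = G.dist x y := SimpleGraph.dist_comm
    have hxy : G.dist x y = 0 := by omega
    have hyx : y = x := by
      have := (hT.isConnected.preconnected x y).dist_eq_zero_iff.mp hxy
      exact this.symm
    subst hyx
    have := hp2.support_nodup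
    rw [p2.support_eq_cons] at this
    exact (List.nodup_cons.mp this).1 hy2
  have hpe : p = p1.append p2 := tree_unique_path hT hp key
  rw [hpe, Walk.mem_support_append_iff]
  exact Or.inl (p1.end_mem_support)

lemma tree_eq_of_dist_add (hT : G.IsTree) {u v c₁ c₂ : V}
    (h1 : G.dist u c₁ + G.dist c₁ v = G.dist u v)
    (h2 : G.dist u c₂ + G.dist c₂ v = G.dist u v)
    (hd : G.dist u c₁ = G.dist u c₂) : c₁ = c₂ := by
  classical
  obtain ⟨p, hp, hl⟩ := hT.isConnected.exists_path_of_dist u v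
  have m1 : c₁ ∈ p.support := tree_mem_support_of_dist_add hT hp h1
  have m2 : c₂ ∈ p.support := tree_mem_support_of_dist_add hT hp h2
  have m2' : c₂ ∈ (p.takeUntil c₁ m1).support ∨ c₂ ∈ (p.dropUntil c₁ m1).support := by
    rw [← Walk.mem_support_append_iff, p.take_spec m1]; exact m2
  rcases m2' with hm | hm
  · have := tree_dist_add_of_mem_support hT (hp.takeUntil m1) hm
    have h0 : G.dist c₂ c₁ = 0 := by omega
    exact ((hT.isConnected.preconnected c₂ c₁).dist_eq_zero_iff.mp h0).symm
  · have := tree_dist_add_of_mem_support hT (hp.dropUntil m1) hm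
    have h0 : G.dist c₁ c₂ = 0 := by omega
    exact (hT.isConnected.preconnected c₁ c₂).dist_eq_zero_iff.mp h0

lemma tree_adj_dist (hT : G.IsTree) (r : V) {x y : V} (hxy : G.Adj x y) :
    G.dist r y = G.dist r x + 1 ∨ G.dist r x = G.dist r y + 1 := by
  classical
  have hd1 : G.dist x y = 1 := dist_eq_one_iff_adj.mpr hxy
  obtain ⟨p, hp, hl⟩ := hT.isConnected.exists_path_of_dist r x
  by_cases hy : y ∈ p.support
  · right
    have := tree_dist_add_of_mem_support hT hp hy
    have hc : G.dist y x = 1 := by rw [SimpleGraph.dist_comm]; exact hd1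
    omega
  · left
    have hq : (p.concat hxy).IsPath := by
      rw [Walk.concat_eq_append, Walk.isPath_def, Walk.support_append]
      refine List.Nodup.append hp.support_nodup ?_ ?_
      · simp
      · intro z hz1 hz2
        simp only [Walk.support_cons, Walk.support_nil, List.tail_cons, List.mem_singleton] at hz2
        subst hz2; exact hy hz1
    have := tree_path_length hT hq
    rw [Walk.length_concat, hl] at this
    omega

end TreeBasics

/-- A (cubic) multipole: finitely many vertices `V`, internal edges `E` (with ordered
endpoints `ends`), semiedges `S` each incident to a vertex via `vinc`, and free edges `F`
(isolated edges consisting of two paired semiedges). -/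
structure Multipole where
  V : Type
  E : Type
  S : Type
  F : Type
  [fV : Fintype V]
  [fE : Fintype E]
  [fS : Fintype S]
  [fF : Fintype F]
  ends : E → V × V
  vinc : S → V

namespace Multipole

variable (M : Multipole)

/-- The incidences ("items") at the vertices of a multipole: edge-ends and semiedges. -/
abbrev Item : Type := (M.E × Bool) ⊕ M.S

/-- The vertex at which an item is incident. -/
def itemAt : M.Item → M.V
  | Sum.inl (e, b) => cond b (M.ends e).2 (M.ends e).1
  | Sum.inr s => M.vinc s

/-- The color of an item under an assignment of colors to edges and semiedges. -/
def itemCol (φE : M.E → Fin 3) (φS : M.S → Fin 3) : M.Item → Fin 3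
  | Sum.inl (e, _) => φE e
  | Sum.inr s => φS s

/-- A multipole is cubic when every vertex has exactly 3 incidences
(edge-ends plus semiedges). -/
def IsCubic : Prop := ∀ v : M.V, Nat.card {i : M.Item // M.itemAt i = v} = 3

/-- A Tait coloring: edges and semiedges are colored with 3 colors so that distinct
incidences at a common vertex receive distinct colors. (A free edge carries a single
color, shared by its two semiedges, and imposes no constraint.) -/
def IsTait (φE : M.E → Fin 3) (φS : M.S → Fin 3) : Prop :=
  ∀ i j : M.Item, i ≠ j → M.itemAt i = M.itemAt j →
    M.itemCol φE φS i ≠ M.itemCol φE φS j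

/-- The number of semiedges: each free edge contributes two semiedges. -/
noncomputable def numSemiedges : ℕ := Nat.card M.S + 2 * Nat.card M.F

end Multipole

namespace Multipole

variable (M : Multipole)

/-- The underlying simple graph `G[M]` on the vertices of `M`: two vertices are adjacent
when some internal edge joins them. -/
def graph : SimpleGraph M.V where
  Adj v w := v ≠ w ∧ ∃ e : M.E, M.ends e = (v, w) ∨ M.ends e = (w, v)
  symm := by
    refine ⟨?_⟩
    rintro v w ⟨hvw, e, he⟩
    exact ⟨hvw.symm, e, he.symm⟩
  loopless := by refine ⟨?_⟩; rintro v ⟨hv, -⟩; exact hv rfl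

end Multipole


section MultipoleAux
open Multipole

variable {M : Multipole}

def oth (M : Multipole) (p : M.E × Bool) : M.V := cond p.2 (M.ends p.1).1 (M.ends p.1).2

lemma itemAt_inl (M : Multipole) (e : M.E) (bb : Bool) :
    M.itemAt (.inl (e, bb)) = cond bb (M.ends e).2 (M.ends e).1 := rfl

lemma itemAt_inr (M : Multipole) (s : M.S) : M.itemAt (.inr s) = M.vinc s := rfl

lemma oth_swap (M : Multipole) (e : M.E) (bb : Bool) :
    M.itemAt (.inl (e, !bb)) = oth M (e, bb) ∧ oth M (e, !bb) = M.itemAt (.inl (e, bb)) := by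
  cases bb <;> exact ⟨rfl, rfl⟩

lemma adj_oth (hloop : ∀ e : M.E, (M.ends e).1 ≠ (M.ends e).2) (p : M.E × Bool) :
    M.graph.Adj (M.itemAt (.inl p)) (oth M p) := by
  obtain ⟨e, bb⟩ := p
  cases bb
  · exact ⟨hloop e, e, Or.inl Prod.mk.eta.symm⟩
  · exact ⟨(hloop e).symm, e, Or.inr Prod.mk.eta.symm⟩

lemma adj_edge {x y : M.V} (h : M.graph.Adj x y) :
    ∃ p : M.E × Bool, M.itemAt (.inl p) = x ∧ oth M p = y := by
  obtain ⟨hne, e, he | he⟩ := h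
  · exact ⟨(e, false), by simp [itemAt_inl, he], by simp [oth, he]⟩
  · exact ⟨(e, true), by simp [itemAt_inl, he], by simp [oth, he]⟩

lemma ends_sym2 (M : Multipole) (e : M.E) (bb : Bool) :
    s(M.itemAt (.inl (e, bb)), oth M (e, bb)) = s((M.ends e).1, (M.ends e).2) := by
  cases bb
  · rfl
  · exact Sym2.eq_swap

lemma item_eq (hsimple : Function.Injective fun e : M.E => s((M.ends e).1, (M.ends e).2))
    (hloop : ∀ e : M.E, (M.ends e).1 ≠ (M.ends e).2) {p q : M.E × Bool}
    (h1 : M.itemAt (.inl p) = M.itemAt (.inl q)) (h2 : oth M p = oth M q) : p = q := by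
  obtain ⟨e, be⟩ := p; obtain ⟨f, bf⟩ := q
  have hef : e = f := hsimple (by
    have a1 := ends_sym2 M e be; have a2 := ends_sym2 M f bf
    simp only []
    rw [← a1, ← a2, h1, h2])
  subst hef
  cases be <;> cases bf
  · rfl
  · exact absurd h1 (hloop e)
  · exact absurd h1.symm (hloop e)
  · rfl

def Bel (M : Multipole) (r v w : M.V) : Prop :=
  M.graph.dist r w = M.graph.dist r v + M.graph.dist v w

def Chld (M : Multipole) (r x y : M.V) : Prop :=
  M.graph.Adj x y ∧ M.graph.dist r y = M.graph.dist r x + 1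

section BelLemmas
open SimpleGraph
variable {r : M.V}

lemma Bel_self (M : Multipole) (r v : M.V) : Bel M r v v := by simp [Bel]

lemma Bel_root (M : Multipole) (r w : M.V) : Bel M r r w := by simp [Bel]

lemma chld_ne {x y : M.V} (h : Chld M r x y) : x ≠ y := M.graph.ne_of_adj h.1

lemma chld_mem {x y : M.V} (h : Chld M r x y) : Bel M r x y := by
  have h1 : M.graph.dist x y = 1 := dist_eq_one_iff_adj.mpr h.1
  simp [Bel, h1, h.2]

lemma chld_asymm {x y : M.V} : ¬(Chld M r x y ∧ Chld M r y x) := by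
  rintro ⟨⟨-, h1⟩, ⟨-, h2⟩⟩; omega

lemma chld_irrefl {x : M.V} : ¬ Chld M r x x := fun h => M.graph.loopless.irrefl x h.1

lemma Bel_trans (htree : M.graph.IsTree) {u w c : M.V}
    (h1 : Bel M r w u) (h2 : Bel M r c w) : Bel M r c u := by
  have t1 : M.graph.dist r u ≤ M.graph.dist r c + M.graph.dist c u :=
    htree.isConnected.dist_triangle
  have t2 : M.graph.dist c u ≤ M.graph.dist c w + M.graph.dist w u :=
    htree.isConnected.dist_triangle
  unfold Bel at *; omega

lemma Bel_chld_sub (htree : M.graph.IsTree) {v c w : M.V}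
    (hc : Chld M r v c) (h : Bel M r c w) : Bel M r v w := by
  have e3 : M.graph.dist v c = 1 := dist_eq_one_iff_adj.mpr hc.1
  have t1 : M.graph.dist v w ≤ M.graph.dist v c + M.graph.dist c w :=
    htree.isConnected.dist_triangle
  have t2 : M.graph.dist r w ≤ M.graph.dist r v + M.graph.dist v w :=
    htree.isConnected.dist_triangle
  have e1 := hc.2
  unfold Bel at *; omega

lemma Bel_not_up {v c : M.V} (hc : Chld M r v c) : ¬ Bel M r c v := by
  intro h; have := hc.2; unfold Bel at h; omega

lemma Bel_ne_of_chld {v c w : M.V} (hc : Chld M r v c) (h : Bel M r c w) : w ≠ v := by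
  rintro rfl; exact Bel_not_up hc h

lemma Bel_step (htree : M.graph.IsTree) {v w : M.V}
    (h : Bel M r v w) (hne : w ≠ v) : ∃ c, Chld M r v c ∧ Bel M r c w := by
  obtain ⟨p, hp, hl⟩ := htree.isConnected.exists_path_of_dist v w
  cases p with
  | nil => exact absurd rfl hne
  | @cons _ c _ h' q =>
    rw [Walk.length_cons] at hl
    have hq : M.graph.dist c w ≤ q.length := SimpleGraph.dist_le q
    have hvc : M.graph.dist v c = 1 := dist_eq_one_iff_adj.mpr h'
    have tri : M.graph.dist v w ≤ M.graph.dist v c + M.graph.dist c w :=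
      htree.isConnected.dist_triangle
    have hvw : M.graph.dist v w = 1 + M.graph.dist c w := by omega
    rcases tree_adj_dist htree r h' with hd | hd
    · refine ⟨c, ⟨h', hd⟩, ?_⟩
      unfold Bel at *; omega
    · exfalso
      have t2 : M.graph.dist r w ≤ M.graph.dist r c + M.graph.dist c w :=
        htree.isConnected.dist_triangle
      unfold Bel at h; omega

lemma Bel_disj (htree : M.graph.IsTree) {v c₁ c₂ w : M.V}
    (h1 : Chld M r v c₁) (h2 : Chld M r v c₂) (hne : c₁ ≠ c₂)
    (m1 : Bel M r c₁ w) (m2 : Bel M r c₂ w) : False := by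
  apply hne
  exact tree_eq_of_dist_add htree (u := r) (v := w) m1.symm m2.symm (h1.2.trans h2.2.symm)

lemma parent_eq (htree : M.graph.IsTree) {v u₁ u₂ : M.V}
    (a1 : M.graph.Adj v u₁) (a2 : M.graph.Adj v u₂)
    (d1 : M.graph.dist r v = M.graph.dist r u₁ + 1)
    (d2 : M.graph.dist r v = M.graph.dist r u₂ + 1) : u₁ = u₂ := by
  have e1 : M.graph.dist u₁ v = 1 := dist_eq_one_iff_adj.mpr a1.symm
  have e2 : M.graph.dist u₂ v = 1 := dist_eq_one_iff_adj.mpr a2.symm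
  exact tree_eq_of_dist_add htree (u := r) (v := v) (by omega) (by omega) (by omega)

lemma items3 (hcubic : M.IsCubic) (v : M.V) :
    ∃ i₁ i₂ i₃ : M.Item, M.itemAt i₁ = v ∧ M.itemAt i₂ = v ∧ M.itemAt i₃ = v ∧
      i₁ ≠ i₂ ∧ i₁ ≠ i₃ ∧ i₂ ≠ i₃ ∧ ∀ t, M.itemAt t = v → t = i₁ ∨ t = i₂ ∨ t = i₃ := by
  classical
  letI := M.fE; letI := M.fS
  letI : Fintype M.Item := by unfold Multipole.Item; infer_instance
  letI : Fintype {i : M.Item // M.itemAt i = v} := Subtype.fintype _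
  have hcard : (Finset.univ : Finset {i : M.Item // M.itemAt i = v}).card = 3 := by
    rw [Finset.card_univ, ← Nat.card_eq_fintype_card]; exact hcubic v
  obtain ⟨x, y, z, hxy, hxz, hyz, huniv⟩ := Finset.card_eq_three.mp hcard
  refine ⟨x.1, y.1, z.1, x.2, y.2, z.2, fun h => hxy (Subtype.ext h),
    fun h => hxz (Subtype.ext h), fun h => hyz (Subtype.ext h), ?_⟩
  intro t ht
  have : (⟨t, ht⟩ : {i : M.Item // M.itemAt i = v}) ∈ (Finset.univ : Finset _) :=
    Finset.mem_univ _
  rw [huniv] at this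
  simp only [Finset.mem_insert, Finset.mem_singleton] at this
  rcases this with h | h | h
  · exact Or.inl (congrArg Subtype.val h)
  · exact Or.inr (Or.inl (congrArg Subtype.val h))
  · exact Or.inr (Or.inr (congrArg Subtype.val h))

lemma nonparent_chld (htree : M.graph.IsTree)
    (hloop : ∀ e : M.E, (M.ends e).1 ≠ (M.ends e).2)
    (hsimple : Function.Injective fun e : M.E => s((M.ends e).1, (M.ends e).2))
    {v : M.V} {pp p : M.E × Bool}
    (hppv : M.itemAt (.inl pp) = v) (hpar : M.graph.dist r v = M.graph.dist r (oth M pp) + 1)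
    (hpv : M.itemAt (.inl p) = v) (hne : p ≠ pp) : Chld M r v (oth M p) := by
  have hadj : M.graph.Adj v (oth M p) := hpv ▸ adj_oth hloop p
  rcases tree_adj_dist htree r hadj with h | h
  · exact ⟨hadj, h⟩
  · exfalso; apply hne
    have hadj' : M.graph.Adj v (oth M pp) := hppv ▸ adj_oth hloop pp
    exact item_eq hsimple hloop (hpv.trans hppv.symm)
      (parent_eq htree hadj hadj' h hpar)

lemma root_chld (htree : M.graph.IsTree)
    (hloop : ∀ e : M.E, (M.ends e).1 ≠ (M.ends e).2)
    {p : M.E × Bool} (hpv : M.itemAt (.inl p) = r) : Chld M r r (oth M p) := by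
  have hadj : M.graph.Adj r (oth M p) := hpv ▸ adj_oth hloop p
  rcases tree_adj_dist htree r hadj with h | h
  · exact ⟨hadj, h⟩
  · exfalso; rw [SimpleGraph.dist_self] at h; omega

noncomputable def dpE (M : Multipole) (r : M.V) (e : M.E) : M.V :=
  if M.graph.dist r (M.ends e).1 < M.graph.dist r (M.ends e).2 then (M.ends e).2
  else (M.ends e).1

lemma dpE_cases (htree : M.graph.IsTree)
    (hloop : ∀ e : M.E, (M.ends e).1 ≠ (M.ends e).2)
    (p : M.E × Bool) {w : M.V} (h : M.itemAt (.inl p) = w) :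
    dpE M r p.1 = w ∨ (Chld M r w (oth M p) ∧ dpE M r p.1 = oth M p) := by
  obtain ⟨e, bb⟩ := p
  have hadj : M.graph.Adj w (oth M (e, bb)) := h ▸ adj_oth hloop (e, bb)
  rcases tree_adj_dist htree r hadj with hd | hd
  · right
    refine ⟨⟨hadj, hd⟩, ?_⟩
    cases bb
    · have h1 : (M.ends e).1 = w := h
      have : oth M (e, false) = (M.ends e).2 := rfl
      rw [this] at hd ⊢
      simp only [dpE]
      rw [if_pos (by rw [h1]; omega)]
    · have h1 : (M.ends e).2 = w := h
      have : oth M (e, true) = (M.ends e).1 := rfl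
      rw [this] at hd ⊢
      simp only [dpE]
      rw [if_neg (by rw [h1]; omega)]
  · left
    cases bb
    · have h1 : (M.ends e).1 = w := h
      have h2 : oth M (e, false) = (M.ends e).2 := rfl
      rw [h2] at hd
      simp only [dpE]
      rw [if_neg (by rw [h1]; omega)]
      exact h1
    · have h1 : (M.ends e).2 = w := h
      have h2 : oth M (e, true) = (M.ends e).1 := rfl
      rw [h2] at hd
      simp only [dpE]
      rw [if_pos (by rw [h1]; omega)]
      exact h1

end BelLemmas
end MultipoleAux

section ColoringDefs
open Multipole SimpleGraph

variable {M : Multipole}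

def ProperAt (M : Multipole) (φE : M.E → Fin 3) (φS : M.S → Fin 3) (w : M.V) : Prop :=
  ∀ i j : M.Item, M.itemAt i = w → M.itemAt j = w → i ≠ j →
    M.itemCol φE φS i ≠ M.itemCol φE φS j

def thrd (x y : Fin 3) : Fin 3 := -(x + y)

lemma thrd_ne : ∀ x y : Fin 3, x ≠ y → thrd x y ≠ x ∧ thrd x y ≠ y := by decide
lemma ex_ne2 : ∀ q z : Fin 3, ∃ x, x ≠ q ∧ x ≠ z := by decide
lemma ex_pair : ∀ q u w : Fin 3, u ≠ w →
    ∃ x y, x ≠ y ∧ x ≠ q ∧ y ≠ q ∧ x ≠ u ∧ y ≠ w := by decide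

def Ok (M : Multipole) (r : M.V) (ε₂ ε₃ : M.S) (a b : Fin 3) (v : M.V) (q : Fin 3) : Prop :=
  (M.vinc ε₂ = v → q ≠ b) ∧
  (M.vinc ε₃ = v → q ≠ a) ∧
  (M.vinc ε₂ = M.vinc ε₃ → Chld M r v (M.vinc ε₂) → q ≠ thrd a b) ∧
  (M.vinc ε₂ = v → Chld M r v (M.vinc ε₃) → q = a) ∧
  (M.vinc ε₃ = v → Chld M r v (M.vinc ε₂) → q = b) ∧
  (Chld M r v (M.vinc ε₂) → Chld M r (M.vinc ε₂) (M.vinc ε₃) → q ≠ a) ∧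
  (Chld M r v (M.vinc ε₃) → Chld M r (M.vinc ε₃) (M.vinc ε₂) → q ≠ b)

def Fit (M : Multipole) (r : M.V) (ε₂ ε₃ : M.S) (a b : Fin 3) (v : M.V)
    (t : M.Item) (z : Fin 3) : Prop :=
  (t = .inr ε₂ → z = b) ∧ (t = .inr ε₃ → z = a) ∧
  (∀ p : M.E × Bool, t = .inl p → Chld M r v (oth M p) → Ok M r ε₂ ε₃ a b (oth M p) z)

lemma glue (htree : M.graph.IsTree)
    (hloop : ∀ e : M.E, (M.ends e).1 ≠ (M.ends e).2)
    (hsimple : Function.Injective fun e : M.E => s((M.ends e).1, (M.ends e).2))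
    (r : M.V) (ε₂ ε₃ : M.S) (a b : Fin 3) (v : M.V)
    (col : ∀ i : M.Item, M.itemAt i = v → Fin 3)
    (hinj : ∀ i hi j hj, i ≠ j → col i hi ≠ col j hj)
    (hch : ∀ (p : M.E × Bool) (h : M.itemAt (.inl p) = v), Chld M r v (oth M p) →
      ∃ ψE ψS, ψE p.1 = col (.inl p) h ∧
        (∀ w, Bel M r (oth M p) w → ProperAt M ψE ψS w) ∧
        (Bel M r (oth M p) (M.vinc ε₂) → ψS ε₂ = b) ∧
        (Bel M r (oth M p) (M.vinc ε₃) → ψS ε₃ = a)) :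
    ∃ φE φS, (∀ i (hi : M.itemAt i = v), M.itemCol φE φS i = col i hi) ∧
      (∀ w, Bel M r v w → ProperAt M φE φS w) ∧
      (Bel M r v (M.vinc ε₂) → M.vinc ε₂ ≠ v → φS ε₂ = b) ∧
      (Bel M r v (M.vinc ε₃) → M.vinc ε₃ ≠ v → φS ε₃ = a) := by
  classical
  have hch' : ∀ c : M.V, Chld M r v c → ∃ (ψE : M.E → Fin 3) (ψS : M.S → Fin 3),
      (∀ (p : M.E × Bool) (h : M.itemAt (.inl p) = v), oth M p = c →
        ψE p.1 = col (.inl p) h) ∧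
      (∀ w, Bel M r c w → ProperAt M ψE ψS w) ∧
      (Bel M r c (M.vinc ε₂) → ψS ε₂ = b) ∧ (Bel M r c (M.vinc ε₃) → ψS ε₃ = a) := by
    intro c hc
    obtain ⟨p0, hp0, ho0⟩ := adj_edge hc.1
    obtain ⟨ψE, ψS, he, hprop, h2, h3⟩ := hch p0 hp0 (by rw [ho0]; exact hc)
    rw [ho0] at hprop h2 h3
    refine ⟨ψE, ψS, ?_, hprop, h2, h3⟩
    intro p h hop
    have hpp : p = p0 := item_eq hsimple hloop (h.trans hp0.symm) (hop.trans ho0.symm)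
    subst hpp; exact he
  choose! ψE ψS hΨe hΨp hΨ2 hΨ3 using hch'
  set φE : M.E → Fin 3 := fun e =>
    if h1 : ∃ c, Chld M r v c ∧ Bel M r c (dpE M r e) then ψE h1.choose e
    else if h2 : M.itemAt (.inl (e, false)) = v then col (.inl (e, false)) h2
    else if h3 : M.itemAt (.inl (e, true)) = v then col (.inl (e, true)) h3
    else 0 with hφE
  set φS : M.S → Fin 3 := fun s =>
    if h1 : ∃ c, Chld M r v c ∧ Bel M r c (M.vinc s) then ψS h1.choose s
    else if h2 : M.vinc s = v then col (.inr s) h2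
    else 0 with hφS
  have uniq : ∀ {c x} (_ : Chld M r v c) (_ : Bel M r c x)
      (h1 : ∃ c', Chld M r v c' ∧ Bel M r c' x), h1.choose = c := by
    intro c x hc hx h1
    by_contra hne
    exact Bel_disj htree h1.choose_spec.1 hc hne h1.choose_spec.2 hx
  have evE : ∀ {c}, Chld M r v c → ∀ e : M.E, Bel M r c (dpE M r e) → φE e = ψE c e := by
    intro c hc e hx
    have h1 : ∃ c', Chld M r v c' ∧ Bel M r c' (dpE M r e) := ⟨c, hc, hx⟩
    rw [hφE]
    simp only
    rw [dif_pos h1, uniq hc hx h1]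
  have evS : ∀ {c}, Chld M r v c → ∀ s : M.S, Bel M r c (M.vinc s) → φS s = ψS c s := by
    intro c hc s hx
    have h1 : ∃ c', Chld M r v c' ∧ Bel M r c' (M.vinc s) := ⟨c, hc, hx⟩
    rw [hφS]
    simp only
    rw [dif_pos h1, uniq hc hx h1]
  have A : ∀ i (hi : M.itemAt i = v), M.itemCol φE φS i = col i hi := by
    rintro (p | s) hi
    · show φE p.1 = _
      rcases dpE_cases htree hloop p hi with hd | ⟨hch1, hd⟩
      · have hno : ¬ ∃ c, Chld M r v c ∧ Bel M r c (dpE M r p.1) := by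
          rintro ⟨c, hc, hBel⟩
          rw [hd] at hBel
          exact Bel_not_up hc hBel
        rw [hφE]; simp only
        rw [dif_neg hno]
        obtain ⟨e, bb⟩ := p
        cases bb
        · rw [dif_pos hi]
        · have hno2 : ¬ M.itemAt (.inl (e, false)) = v := by
            intro h2
            exact hloop e (h2.trans hi.symm)
          rw [dif_neg hno2, dif_pos hi]
      · have hBel : Bel M r (oth M p) (dpE M r p.1) := by rw [hd]; exact Bel_self M r _
        rw [evE hch1 p.1 hBel]
        exact hΨe (oth M p) hch1 p hi rfl
    · show φS s = _
      have hno : ¬ ∃ c, Chld M r v c ∧ Bel M r c (M.vinc s) := by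
        rintro ⟨c, hc, hBel⟩
        rw [show M.vinc s = v from hi] at hBel
        exact Bel_not_up hc hBel
      rw [hφS]; simp only
      rw [dif_neg hno, dif_pos (show M.vinc s = v from hi)]
  have B : ∀ c, Chld M r v c → ∀ w, Bel M r c w → ∀ i, M.itemAt i = w →
      M.itemCol φE φS i = M.itemCol (ψE c) (ψS c) i := by
    intro c hc w hw
    rintro (p | s) hi
    · show φE p.1 = ψE c p.1
      rcases dpE_cases htree hloop p hi with hd | ⟨hch1, hd⟩
      · exact evE hc p.1 (by rw [hd]; exact hw)
      · refine evE hc p.1 ?_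
        rw [hd]
        exact Bel_trans htree (chld_mem hch1) hw
    · show φS s = ψS c s
      exact evS hc s (by rw [show M.vinc s = w from hi]; exact hw)
  refine ⟨φE, φS, A, ?_, ?_, ?_⟩
  · intro w hw
    by_cases hwv : w = v
    · subst hwv
      intro i j hi hj hne
      rw [A i hi, A j hj]
      exact hinj i hi j hj hne
    · obtain ⟨c, hc, hw'⟩ := Bel_step htree hw hwv
      intro i j hi hj hne
      rw [B c hc w hw' i hi, B c hc w hw' j hj]
      exact hΨp c hc w hw' i j hi hj hne
  · intro h2 hne
    obtain ⟨c, hc, hm⟩ := Bel_step htree h2 hne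
    rw [evS hc ε₂ hm]
    exact hΨ2 c hc hm
  · intro h3 hne
    obtain ⟨c, hc, hm⟩ := Bel_step htree h3 hne
    rw [evS hc ε₃ hm]
    exact hΨ3 c hc hm

end ColoringDefs

section RecColor
open Multipole SimpleGraph

variable {M : Multipole}

lemma sec (hab : a ≠ b) {r v c : M.V} {ε₂ ε₃ : M.S} {q : Fin 3}
    (hOk : Ok M r ε₂ ε₃ a b v q) (hc : Chld M r v c)
    (hm2 : Bel M r c (M.vinc ε₂)) (hm3 : Bel M r c (M.vinc ε₃)) :
    ∃ x, x ≠ q ∧ Ok M r ε₂ ε₃ a b c x := by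
  obtain ⟨K1, K2, K3, K4, K5, K6, K7⟩ := hOk
  by_cases h2c : M.vinc ε₂ = c
  · by_cases h3c : M.vinc ε₃ = c
    · -- both at c : forced thrd a b
      refine ⟨thrd a b, Ne.symm (K3 (h2c.trans h3c.symm) (by rw [h2c]; exact hc)),
        fun _ => (thrd_ne a b hab).2, fun _ => (thrd_ne a b hab).1,
        ?_, ?_, ?_, ?_, ?_⟩
      · intro _ hch; rw [h2c] at hch; exact absurd hch chld_irrefl
      · intro _ hch; rw [h3c] at hch; exact absurd hch chld_irrefl
      · intro _ hch; rw [h2c] at hch; exact absurd hch chld_irrefl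
      · intro hch _; rw [h2c] at hch; exact absurd hch chld_irrefl
      · intro hch _; rw [h3c] at hch; exact absurd hch chld_irrefl
    · by_cases hch3 : Chld M r c (M.vinc ε₃)
      · -- forced a
        have hvv2 : Chld M r v (M.vinc ε₂) := by rw [h2c]; exact hc
        have hv23 : Chld M r (M.vinc ε₂) (M.vinc ε₃) := by rw [h2c]; exact hch3
        refine ⟨a, Ne.symm (K6 hvv2 hv23), fun _ => hab, fun h3 => absurd h3 h3c,
          fun hv _ => absurd (hv ▸ h2c) h3c, fun _ _ => rfl,
          fun h3 _ => absurd h3 h3c,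
          fun hch _ => absurd (h2c ▸ hch) chld_irrefl, ?_⟩
        · intro hch3' hch32
          rw [h2c] at hch32
          exact absurd ⟨hch3', hch32⟩ chld_asymm
      · obtain ⟨x, hxq, hxb⟩ := ex_ne2 q b
        refine ⟨x, hxq, fun _ => hxb, fun h3 => absurd h3 h3c,
          fun hv _ => absurd (hv ▸ h2c) h3c,
          fun _ hch => absurd hch hch3, fun h3 _ => absurd h3 h3c,
          fun hch _ => absurd (h2c ▸ hch) chld_irrefl,
          fun hch _ => absurd hch hch3⟩
  · by_cases h3c : M.vinc ε₃ = c
    · by_cases hch2 : Chld M r c (M.vinc ε₂)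
      · -- forced b
        have hvv3 : Chld M r v (M.vinc ε₃) := by rw [h3c]; exact hc
        have hv32 : Chld M r (M.vinc ε₃) (M.vinc ε₂) := by rw [h3c]; exact hch2
        refine ⟨b, Ne.symm (K7 hvv3 hv32), fun h2 => absurd h2 h2c,
          fun _ => Ne.symm hab, fun hv _ => absurd (hv.symm ▸ h3c) h2c,
          fun h2 _ => absurd h2 h2c, fun _ _ => rfl, ?_,
          fun hch _ => absurd (h3c ▸ hch) chld_irrefl⟩
        · intro hch2' hch23
          rw [h3c] at hch23
          exact absurd ⟨hch2', hch23⟩ chld_asymm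
      · obtain ⟨x, hxq, hxa⟩ := ex_ne2 q a
        refine ⟨x, hxq, fun h2 => absurd h2 h2c, fun _ => hxa,
          fun hv _ => absurd (hv.symm ▸ h3c) h2c, fun h2 _ => absurd h2 h2c,
          fun _ hch => absurd hch hch2, fun hch _ => absurd hch hch2,
          fun hch _ => absurd (h3c ▸ hch) chld_irrefl⟩
    · by_cases gT : M.vinc ε₂ = M.vinc ε₃ ∧ Chld M r c (M.vinc ε₂)
      · obtain ⟨x, hxq, hxT⟩ := ex_ne2 q (thrd a b)
        refine ⟨x, hxq, fun h2 => absurd h2 h2c, fun h3 => absurd h3 h3c,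
          fun _ _ => hxT, fun h2 _ => absurd h2 h2c, fun h3 _ => absurd h3 h3c,
          ?_, ?_⟩
        · intro _ hch; rw [gT.1] at hch; exact absurd hch chld_irrefl
        · intro _ hch; rw [← gT.1] at hch; exact absurd hch chld_irrefl
      · by_cases gA : Chld M r c (M.vinc ε₂) ∧ Chld M r (M.vinc ε₂) (M.vinc ε₃)
        · obtain ⟨x, hxq, hxa⟩ := ex_ne2 q a
          refine ⟨x, hxq, fun h2 => absurd h2 h2c, fun h3 => absurd h3 h3c,
            ?_, fun h2 _ => absurd h2 h2c, fun h3 _ => absurd h3 h3c,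
            fun _ _ => hxa, ?_⟩
          · intro hv _
            have := gA.2; rw [hv] at this; exact absurd this chld_irrefl
          · intro _ hch32
            exact absurd ⟨gA.2, hch32⟩ chld_asymm
        · by_cases gB : Chld M r c (M.vinc ε₃) ∧ Chld M r (M.vinc ε₃) (M.vinc ε₂)
          · obtain ⟨x, hxq, hxb⟩ := ex_ne2 q b
            refine ⟨x, hxq, fun h2 => absurd h2 h2c, fun h3 => absurd h3 h3c,
              ?_, fun h2 _ => absurd h2 h2c, fun h3 _ => absurd h3 h3c,
              ?_, fun _ _ => hxb⟩
            · intro hv _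
              have := gB.2; rw [hv] at this; exact absurd this chld_irrefl
            · intro _ hch23
              exact absurd ⟨hch23, gB.2⟩ chld_asymm
          · obtain ⟨x, hxq, -⟩ := ex_ne2 q q
            refine ⟨x, hxq, fun h2 => absurd h2 h2c, fun h3 => absurd h3 h3c,
              fun hv hch => absurd ⟨hv, hch⟩ gT, fun h2 _ => absurd h2 h2c,
              fun h3 _ => absurd h3 h3c, fun h1 h2 => absurd ⟨h1, h2⟩ gA,
              fun h1 h2 => absurd ⟨h1, h2⟩ gB⟩

end RecColor

section RecMain
open Multipole SimpleGraph

variable {M : Multipole}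

lemma choose_xy (htree : M.graph.IsTree)
    (hloop : ∀ e : M.E, (M.ends e).1 ≠ (M.ends e).2)
    (hsimple : Function.Injective fun e : M.E => s((M.ends e).1, (M.ends e).2))
    (r : M.V) (ε₂ ε₃ : M.S) (a b : Fin 3) (h23 : ε₂ ≠ ε₃) (hab : a ≠ b)
    {v : M.V} {q : Fin 3} (hOk : Ok M r ε₂ ε₃ a b v q)
    {I J : M.Item} (hIJ : I ≠ J) (hIat : M.itemAt I = v) (hJat : M.itemAt J = v)
    (hloc : ∀ p : M.E × Bool, M.itemAt (.inl p) = v → Chld M r v (oth M p) →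
      (Sum.inl p : M.Item) = I ∨ (Sum.inl p : M.Item) = J)
    (hloc2 : M.vinc ε₂ = v → (Sum.inr ε₂ : M.Item) = I ∨ (Sum.inr ε₂ : M.Item) = J)
    (hloc3 : M.vinc ε₃ = v → (Sum.inr ε₃ : M.Item) = I ∨ (Sum.inr ε₃ : M.Item) = J) :
    ∃ x y : Fin 3, x ≠ y ∧ x ≠ q ∧ y ≠ q ∧
      Fit M r ε₂ ε₃ a b v I x ∧ Fit M r ε₂ ε₃ a b v J y := by
  classical
  obtain ⟨K1, K2, K3, K4, K5, K6, K7⟩ := hOk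
  by_cases e2 : M.vinc ε₂ = v
  · have hqb : q ≠ b := K1 e2
    have fit2 : Fit M r ε₂ ε₃ a b v (.inr ε₂) b :=
      ⟨fun _ => rfl, fun he => absurd (Sum.inr.inj he) h23,
        fun p hp => absurd hp (by simp)⟩
    by_cases e3 : M.vinc ε₃ = v
    · -- both ε₂, ε₃ at v
      have hqa : q ≠ a := K2 e3
      have fit3 : Fit M r ε₂ ε₃ a b v (.inr ε₃) a :=
        ⟨fun he => absurd (Sum.inr.inj he).symm h23, fun _ => rfl,
          fun p hp => absurd hp (by simp)⟩
      rcases hloc2 e2 with hI2 | hJ2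
      · rcases hloc3 e3 with hI3 | hJ3
        · exact absurd (hI3.trans hI2.symm) (fun e => h23 (Sum.inr.inj e).symm)
        · exact ⟨b, a, Ne.symm hab, Ne.symm hqb, Ne.symm hqa,
            hI2 ▸ fit2, hJ3 ▸ fit3⟩
      · rcases hloc3 e3 with hI3 | hJ3
        · exact ⟨a, b, hab, Ne.symm hqa, Ne.symm hqb, hI3 ▸ fit3, hJ2 ▸ fit2⟩
        · exact absurd (hJ3.trans hJ2.symm) (fun e => h23 (Sum.inr.inj e).symm)
    · -- ε₂ at v, ε₃ not at v
      have fitO : ∀ t, M.itemAt t = v → t ≠ .inr ε₂ →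
          Fit M r ε₂ ε₃ a b v t (thrd q b) := by
        intro t ht htε₂
        refine ⟨fun he => absurd he htε₂,
          fun he => absurd (by rw [he] at ht; exact ht) e3, ?_⟩
        intro p hp hc
        refine ⟨?_, ?_, ?_, ?_, ?_, ?_, ?_⟩
        · intro h2c; exact absurd (e2.symm.trans h2c) (chld_ne hc)
        · intro h3c
          have hqa : q = a := K4 e2 (by rw [h3c]; exact hc)
          rw [hqa]
          exact (thrd_ne a b hab).1
        · intro h23v _; exact absurd (h23v.symm.trans e2) e3
        · intro h2c _; exact absurd (e2.symm.trans h2c) (chld_ne hc)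
        · intro _ hch2
          rw [e2] at hch2
          have := hc.2; have := hch2.2; omega
        · intro hch2 _
          rw [e2] at hch2
          have := hc.2; have := hch2.2; omega
        · intro hch3 hch32
          rw [e2] at hch32
          have := hc.2; have := hch3.2; have := hch32.2; omega
      have hTq : thrd q b ≠ q := (thrd_ne q b hqb).1
      have hTb : thrd q b ≠ b := (thrd_ne q b hqb).2
      rcases hloc2 e2 with hI2 | hJ2
      · exact ⟨b, thrd q b, Ne.symm hTb, Ne.symm hqb, hTq, hI2 ▸ fit2,
          fitO J hJat (fun e => hIJ (e.trans hI2).symm)⟩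
      · exact ⟨thrd q b, b, hTb, hTq, Ne.symm hqb,
          fitO I hIat (fun e => hIJ (e.trans hJ2)),
          hJ2 ▸ fit2⟩
  · by_cases e3 : M.vinc ε₃ = v
    · -- ε₃ at v, ε₂ not at v
      have hqa : q ≠ a := K2 e3
      have fit3 : Fit M r ε₂ ε₃ a b v (.inr ε₃) a :=
        ⟨fun he => absurd (Sum.inr.inj he).symm h23, fun _ => rfl,
          fun p hp => absurd hp (by simp)⟩
      have fitO : ∀ t, M.itemAt t = v → t ≠ .inr ε₃ →
          Fit M r ε₂ ε₃ a b v t (thrd q a) := by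
        intro t ht htε₃
        refine ⟨fun he => absurd (by rw [he] at ht; exact ht) e2,
          fun he => absurd he htε₃, ?_⟩
        intro p hp hc
        refine ⟨?_, ?_, ?_, ?_, ?_, ?_, ?_⟩
        · intro h2c
          have hqb : q = b := K5 e3 (by rw [h2c]; exact hc)
          rw [hqb]
          exact (thrd_ne b a (Ne.symm hab)).1
        · intro h3c; exact absurd (e3.symm.trans h3c) (chld_ne hc)
        · intro h23v _; exact absurd (h23v.trans e3) e2
        · intro _ hch3
          rw [e3] at hch3
          have := hc.2; have := hch3.2; omega
        · intro h3c _; exact absurd (e3.symm.trans h3c) (chld_ne hc)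
        · intro hch2 hch23
          rw [e3] at hch23
          have := hc.2; have := hch2.2; have := hch23.2; omega
        · intro hch3 _
          rw [e3] at hch3
          have := hc.2; have := hch3.2; omega
      have hTq : thrd q a ≠ q := (thrd_ne q a hqa).1
      have hTa : thrd q a ≠ a := (thrd_ne q a hqa).2
      rcases hloc3 e3 with hI3 | hJ3
      · exact ⟨a, thrd q a, Ne.symm hTa, Ne.symm hqa, hTq, hI3 ▸ fit3,
          fitO J hJat (fun e => hIJ (e.trans hI3).symm)⟩
      · exact ⟨thrd q a, a, hTa, hTq, Ne.symm hqa,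
          fitO I hIat (fun e => hIJ (e.trans hJ3)),
          hJ3 ▸ fit3⟩
    · -- neither ε₂ nor ε₃ at v
      have fitFree : ∀ t, M.itemAt t = v → ∀ z : Fin 3,
          (∀ p : M.E × Bool, t = .inl p → Chld M r v (oth M p) →
            Ok M r ε₂ ε₃ a b (oth M p) z) →
          Fit M r ε₂ ε₃ a b v t z := by
        intro t ht z hE
        exact ⟨fun he => absurd (by rw [he] at ht; exact ht) e2,
          fun he => absurd (by rw [he] at ht; exact ht) e3, hE⟩
      have okVac : ∀ (c : M.V) (z : Fin 3), Chld M r v c →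
          ¬ Bel M r c (M.vinc ε₂) → ¬ Bel M r c (M.vinc ε₃) →
          Ok M r ε₂ ε₃ a b c z := by
        intro c z hc n2 n3
        refine ⟨?_, ?_, ?_, ?_, ?_, ?_, ?_⟩
        · exact fun h => absurd (by rw [h]; exact Bel_self M r c) n2
        · exact fun h => absurd (by rw [h]; exact Bel_self M r c) n3
        · exact fun _ hch => absurd (chld_mem hch) n2
        · exact fun h _ => absurd (by rw [h]; exact Bel_self M r c) n2
        · exact fun h _ => absurd (by rw [h]; exact Bel_self M r c) n3
        · exact fun hch _ => absurd (chld_mem hch) n2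
        · exact fun hch _ => absurd (chld_mem hch) n3
      by_cases m2 : Bel M r v (M.vinc ε₂)
      · obtain ⟨c2, hc2, hm2⟩ := Bel_step htree m2 e2
        obtain ⟨p2, hp2v, hp2o⟩ := adj_edge hc2.1
        by_cases m3 : Bel M r v (M.vinc ε₃)
        · obtain ⟨c3, hc3, hm3⟩ := Bel_step htree m3 e3
          by_cases hcc : c2 = c3
          · -- both under the same child c2
            subst hcc
            obtain ⟨x, hxq, okC⟩ := sec hab ⟨K1, K2, K3, K4, K5, K6, K7⟩ hc2 hm2 hm3
            have fitC : ∀ t, M.itemAt t = v → t = .inl p2 →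
                Fit M r ε₂ ε₃ a b v t x := by
              intro t ht hte
              refine fitFree t ht x ?_
              intro p hp _
              have hpe : p2 = p := Sum.inl.inj (hte.symm.trans hp)
              rw [← hpe, hp2o]
              exact okC
            have fitOJ : ∀ t, M.itemAt t = v → t ≠ .inl p2 →
                Fit M r ε₂ ε₃ a b v t (thrd q x) := by
              intro t ht htp2
              refine fitFree t ht _ ?_
              intro p hp hc
              have hne : oth M p ≠ c2 := by
                intro he
                apply htp2
                rw [hp]
                exact congrArg Sum.inl (item_eq hsimple hloop ((hp ▸ ht).trans hp2v.symm) (he.trans hp2o.symm))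
              refine okVac (oth M p) _ hc ?_ ?_
              · exact fun hB => Bel_disj htree hc hc2 hne hB hm2
              · exact fun hB => Bel_disj htree hc hc2 hne hB hm3
            have hTq : thrd q x ≠ q := (thrd_ne q x (Ne.symm hxq)).1
            have hTx : thrd q x ≠ x := (thrd_ne q x (Ne.symm hxq)).2
            rcases hloc p2 hp2v (by rw [hp2o]; exact hc2) with hI2 | hJ2
            · exact ⟨x, thrd q x, Ne.symm hTx, hxq, hTq, hI2 ▸ fitC I hIat hI2.symm,
                fitOJ J hJat (fun e => hIJ (e.trans hI2).symm)⟩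
            · exact ⟨thrd q x, x, hTx, hTq, hxq,
                fitOJ I hIat (fun e => hIJ (e.trans hJ2)),
                hJ2 ▸ fitC J hJat hJ2.symm⟩
          · -- different children
            obtain ⟨p3, hp3v, hp3o⟩ := adj_edge hc3.1
            have hp23 : (Sum.inl p2 : M.Item) ≠ .inl p3 := by
              intro h
              exact hcc (by rw [← hp2o, ← hp3o, Sum.inl.inj h])
            obtain ⟨x, y, hxy', hxq, hyq, hxb, hya⟩ := ex_pair q b a (Ne.symm hab)
            have okC2 : Ok M r ε₂ ε₃ a b c2 x := by
              refine ⟨fun _ => hxb, ?_, ?_, ?_, ?_, ?_, ?_⟩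
              · intro h3
                exact (Bel_disj htree hc2 hc3 hcc (by rw [h3]; exact Bel_self M r c2) hm3).elim
              · intro hv _
                rw [hv] at hm2
                exact (Bel_disj htree hc2 hc3 hcc hm2 hm3).elim
              · intro _ hch
                exact (Bel_disj htree hc2 hc3 hcc (chld_mem hch) hm3).elim
              · intro h3 _
                exact (Bel_disj htree hc2 hc3 hcc (by rw [h3]; exact Bel_self M r c2) hm3).elim
              · intro _ hch23
                exact (Bel_disj htree hc2 hc3 hcc (Bel_trans htree (chld_mem hch23) hm2) hm3).elim
              · intro hch _
                exact (Bel_disj htree hc2 hc3 hcc (chld_mem hch) hm3).elim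
            have okC3 : Ok M r ε₂ ε₃ a b c3 y := by
              refine ⟨?_, fun _ => hya, ?_, ?_, ?_, ?_, ?_⟩
              · intro h2
                exact (Bel_disj htree hc2 hc3 hcc hm2 (by rw [h2]; exact Bel_self M r c3)).elim
              · intro hv hch
                rw [← hv] at hm3
                exact (Bel_disj htree hc2 hc3 hcc hm2 hm3).elim
              · intro h2 _
                exact (Bel_disj htree hc2 hc3 hcc hm2 (by rw [h2]; exact Bel_self M r c3)).elim
              · intro _ hch2
                exact (Bel_disj htree hc2 hc3 hcc hm2 (chld_mem hch2)).elim
              · intro hch _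
                exact (Bel_disj htree hc2 hc3 hcc hm2 (chld_mem hch)).elim
              · intro _ hch32
                exact (Bel_disj htree hc2 hc3 hcc hm2 (Bel_trans htree (chld_mem hch32) hm3)).elim
            have fitC2 : ∀ t, M.itemAt t = v → t = .inl p2 →
                Fit M r ε₂ ε₃ a b v t x := by
              intro t ht hte
              refine fitFree t ht x ?_
              intro p hp _
              have hpe : p2 = p := Sum.inl.inj (hte.symm.trans hp)
              rw [← hpe, hp2o]; exact okC2
            have fitC3 : ∀ t, M.itemAt t = v → t = .inl p3 →
                Fit M r ε₂ ε₃ a b v t y := by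
              intro t ht hte
              refine fitFree t ht y ?_
              intro p hp _
              have hpe : p3 = p := Sum.inl.inj (hte.symm.trans hp)
              rw [← hpe, hp3o]; exact okC3
            rcases hloc p2 hp2v (by rw [hp2o]; exact hc2) with hI2 | hJ2
            · rcases hloc p3 hp3v (by rw [hp3o]; exact hc3) with hI3 | hJ3
              · exact absurd (hI3.trans hI2.symm) (fun e => hp23 e.symm)
              · exact ⟨x, y, hxy', hxq, hyq, hI2 ▸ fitC2 I hIat hI2.symm,
                  hJ3 ▸ fitC3 J hJat hJ3.symm⟩
            · rcases hloc p3 hp3v (by rw [hp3o]; exact hc3) with hI3 | hJ3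
              · exact ⟨y, x, Ne.symm hxy', hyq, hxq, hI3 ▸ fitC3 I hIat hI3.symm,
                  hJ2 ▸ fitC2 J hJat hJ2.symm⟩
              · exact absurd (hJ2.trans hJ3.symm) hp23
        · -- only ε₂ below v
          obtain ⟨x, hxq, hxb⟩ := ex_ne2 q b
          have okC2 : Ok M r ε₂ ε₃ a b c2 x := by
            have n3 : ¬ Bel M r c2 (M.vinc ε₃) :=
              fun hB => m3 (Bel_chld_sub htree hc2 hB)
            refine ⟨fun _ => hxb, ?_, ?_, ?_, ?_, ?_, ?_⟩
            · exact fun h3 => absurd (by rw [h3]; exact Bel_self M r c2) n3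
            · intro hv _
              rw [← hv] at n3
              exact absurd hm2 n3
            · exact fun _ hch => absurd (chld_mem hch) n3
            · exact fun h3 _ => absurd (by rw [h3]; exact Bel_self M r c2) n3
            · exact fun _ hch23 => absurd (Bel_trans htree (chld_mem hch23) hm2) n3
            · exact fun hch _ => absurd (chld_mem hch) n3
          have fitC : ∀ t, M.itemAt t = v → t = .inl p2 →
              Fit M r ε₂ ε₃ a b v t x := by
            intro t ht hte
            refine fitFree t ht x ?_
            intro p hp _
            have hpe : p2 = p := Sum.inl.inj (hte.symm.trans hp)
            rw [← hpe, hp2o]; exact okC2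
          have fitOJ : ∀ t, M.itemAt t = v → t ≠ .inl p2 →
              Fit M r ε₂ ε₃ a b v t (thrd q x) := by
            intro t ht htp2
            refine fitFree t ht _ ?_
            intro p hp hc
            have hne : oth M p ≠ c2 := by
              intro he
              apply htp2
              rw [hp]
              exact congrArg Sum.inl (item_eq hsimple hloop ((hp ▸ ht).trans hp2v.symm) (he.trans hp2o.symm))
            refine okVac (oth M p) _ hc ?_ ?_
            · exact fun hB => Bel_disj htree hc hc2 hne hB hm2
            · exact fun hB => m3 (Bel_chld_sub htree hc hB)
          have hTq : thrd q x ≠ q := (thrd_ne q x (Ne.symm hxq)).1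
          have hTx : thrd q x ≠ x := (thrd_ne q x (Ne.symm hxq)).2
          rcases hloc p2 hp2v (by rw [hp2o]; exact hc2) with hI2 | hJ2
          · exact ⟨x, thrd q x, Ne.symm hTx, hxq, hTq, hI2 ▸ fitC I hIat hI2.symm,
              fitOJ J hJat (fun e => hIJ (e.trans hI2).symm)⟩
          · exact ⟨thrd q x, x, hTx, hTq, hxq,
              fitOJ I hIat (fun e => hIJ (e.trans hJ2)),
              hJ2 ▸ fitC J hJat hJ2.symm⟩
      · by_cases m3 : Bel M r v (M.vinc ε₃)
        · -- only ε₃ below v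
          obtain ⟨c3, hc3, hm3⟩ := Bel_step htree m3 e3
          obtain ⟨p3, hp3v, hp3o⟩ := adj_edge hc3.1
          obtain ⟨x, hxq, hxa⟩ := ex_ne2 q a
          have okC3 : Ok M r ε₂ ε₃ a b c3 x := by
            have n2 : ¬ Bel M r c3 (M.vinc ε₂) :=
              fun hB => m2 (Bel_chld_sub htree hc3 hB)
            refine ⟨?_, fun _ => hxa, ?_, ?_, ?_, ?_, ?_⟩
            · exact fun h2 => absurd (by rw [h2]; exact Bel_self M r c3) n2
            · intro hv _
              rw [hv] at n2
              exact absurd hm3 n2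
            · exact fun h2 _ => absurd (by rw [h2]; exact Bel_self M r c3) n2
            · exact fun _ hch2 => absurd (chld_mem hch2) n2
            · exact fun hch _ => absurd (chld_mem hch) n2
            · exact fun _ hch32 => absurd (Bel_trans htree (chld_mem hch32) hm3) n2
          have fitC : ∀ t, M.itemAt t = v → t = .inl p3 →
              Fit M r ε₂ ε₃ a b v t x := by
            intro t ht hte
            refine fitFree t ht x ?_
            intro p hp _
            have hpe : p3 = p := Sum.inl.inj (hte.symm.trans hp)
            rw [← hpe, hp3o]; exact okC3
          have fitOJ : ∀ t, M.itemAt t = v → t ≠ .inl p3 →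
              Fit M r ε₂ ε₃ a b v t (thrd q x) := by
            intro t ht htp3
            refine fitFree t ht _ ?_
            intro p hp hc
            have hne : oth M p ≠ c3 := by
              intro he
              apply htp3
              rw [hp]
              exact congrArg Sum.inl (item_eq hsimple hloop ((hp ▸ ht).trans hp3v.symm) (he.trans hp3o.symm))
            refine okVac (oth M p) _ hc ?_ ?_
            · exact fun hB => m2 (Bel_chld_sub htree hc hB)
            · exact fun hB => Bel_disj htree hc hc3 hne hB hm3
          have hTq : thrd q x ≠ q := (thrd_ne q x (Ne.symm hxq)).1
          have hTx : thrd q x ≠ x := (thrd_ne q x (Ne.symm hxq)).2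
          rcases hloc p3 hp3v (by rw [hp3o]; exact hc3) with hI3 | hJ3
          · exact ⟨x, thrd q x, Ne.symm hTx, hxq, hTq, hI3 ▸ fitC I hIat hI3.symm,
              fitOJ J hJat (fun e => hIJ (e.trans hI3).symm)⟩
          · exact ⟨thrd q x, x, hTx, hTq, hxq,
              fitOJ I hIat (fun e => hIJ (e.trans hJ3)),
              hJ3 ▸ fitC J hJat hJ3.symm⟩
        · -- neither below v
          obtain ⟨x, y, hxy', hxq, hyq, -, -⟩ := ex_pair q b a (Ne.symm hab)
          have fitAny : ∀ t, M.itemAt t = v → ∀ z : Fin 3,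
              Fit M r ε₂ ε₃ a b v t z := by
            intro t ht z
            refine fitFree t ht z ?_
            intro p hp hc
            refine okVac (oth M p) z hc ?_ ?_
            · exact fun hB => m2 (Bel_chld_sub htree hc hB)
            · exact fun hB => m3 (Bel_chld_sub htree hc hB)
          exact ⟨x, y, hxy', hxq, hyq, fitAny I hIat x, fitAny J hJat y⟩

lemma rec_color (htree : M.graph.IsTree)
    (hloop : ∀ e : M.E, (M.ends e).1 ≠ (M.ends e).2)
    (hsimple : Function.Injective fun e : M.E => s((M.ends e).1, (M.ends e).2))
    (hcubic : M.IsCubic) (r : M.V) (ε₂ ε₃ : M.S) (a b : Fin 3)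
    (h23 : ε₂ ≠ ε₃) (hab : a ≠ b) :
    ∀ n : ℕ, ∀ v : M.V, Nat.card M.V - M.graph.dist r v = n →
      ∀ pp : M.E × Bool, M.itemAt (.inl pp) = v →
        M.graph.dist r v = M.graph.dist r (oth M pp) + 1 →
      ∀ q : Fin 3, Ok M r ε₂ ε₃ a b v q →
      ∃ φE φS, φE pp.1 = q ∧ (∀ w, Bel M r v w → ProperAt M φE φS w) ∧
        (Bel M r v (M.vinc ε₂) → φS ε₂ = b) ∧ (Bel M r v (M.vinc ε₃) → φS ε₃ = a) := by
  intro n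
  induction n using Nat.strong_induction_on with
  | _ n IH =>
  intro v hn pp hpp hpar q hOk
  classical
  have hdlt : M.graph.dist r v < Nat.card M.V := by
    letI := M.fV
    obtain ⟨p, hp, hl⟩ := htree.isConnected.exists_path_of_dist r v
    rw [Nat.card_eq_fintype_card, ← hl]
    exact hp.length_lt
  obtain ⟨i₁, i₂, i₃, ha1, ha2, ha3, h12, h13, h23', hcov⟩ := items3 hcubic v
  obtain ⟨I, J, hIJ, hIpp, hJpp, hIat, hJat, hcov'⟩ :
      ∃ I J : M.Item, I ≠ J ∧ I ≠ .inl pp ∧ J ≠ .inl pp ∧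
        M.itemAt I = v ∧ M.itemAt J = v ∧
        (∀ t, M.itemAt t = v → t = .inl pp ∨ t = I ∨ t = J) := by
    rcases hcov (.inl pp) hpp with h | h | h
    · exact ⟨i₂, i₃, h23', fun e => h12 (h.symm ▸ e.symm), fun e => h13 (h.symm ▸ e.symm),
        ha2, ha3, fun t ht => by rw [h]; exact hcov t ht⟩
    · refine ⟨i₁, i₃, h13, fun e => h12 (e.trans h), fun e => h23' (e.trans h).symm,
        ha1, ha3, fun t ht => ?_⟩
      rcases hcov t ht with h' | h' | h'
      · exact Or.inr (Or.inl h')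
      · exact Or.inl (h'.trans h.symm)
      · exact Or.inr (Or.inr h')
    · refine ⟨i₁, i₂, h12, fun e => h13 (e.trans h), fun e => h23' (e.trans h),
        ha1, ha2, fun t ht => ?_⟩
      rcases hcov t ht with h' | h' | h'
      · exact Or.inr (Or.inl h')
      · exact Or.inr (Or.inr h')
      · exact Or.inl (h'.trans h.symm)
  have hloc : ∀ p : M.E × Bool, M.itemAt (.inl p) = v → Chld M r v (oth M p) →
      (Sum.inl p : M.Item) = I ∨ (Sum.inl p : M.Item) = J := by
    intro p hp hc
    rcases hcov' (.inl p) hp with he | he | he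
    · exfalso
      have hpe : p = pp := Sum.inl.inj he
      rw [hpe] at hc
      have := hc.2; omega
    · exact Or.inl he
    · exact Or.inr he
  have hloc2 : M.vinc ε₂ = v → (Sum.inr ε₂ : M.Item) = I ∨ (Sum.inr ε₂ : M.Item) = J := by
    intro e2
    rcases hcov' (.inr ε₂) (show M.itemAt (.inr ε₂) = v from e2) with he | he | he
    · exact absurd he (by simp)
    · exact Or.inl he
    · exact Or.inr he
  have hloc3 : M.vinc ε₃ = v → (Sum.inr ε₃ : M.Item) = I ∨ (Sum.inr ε₃ : M.Item) = J := by
    intro e3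
    rcases hcov' (.inr ε₃) (show M.itemAt (.inr ε₃) = v from e3) with he | he | he
    · exact absurd he (by simp)
    · exact Or.inl he
    · exact Or.inr he
  have hxy := choose_xy htree hloop hsimple r ε₂ ε₃ a b h23 hab hOk hIJ hIat hJat hloc hloc2 hloc3
  -- now build the coloring via glue
  obtain ⟨x, y, hxy', hxq, hyq, fitI, fitJ⟩ := hxy
  set col : ∀ i : M.Item, M.itemAt i = v → Fin 3 :=
    fun t _ => if t = .inl pp then q else if t = I then x else y with hcoldef
  have cval : ∀ (t : M.Item) (ht : M.itemAt t = v),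
      (t = .inl pp → col t ht = q) ∧ (t = I → col t ht = x) ∧ (t = J → col t ht = y) := by
    intro t ht
    refine ⟨?_, ?_, ?_⟩
    · intro he
      rw [hcoldef]; simp only
      rw [if_pos he]
    · intro he
      rw [hcoldef]; simp only
      rw [if_neg (fun e => hIpp (he.symm.trans e)), if_pos he]
    · intro he
      rw [hcoldef]; simp only
      rw [if_neg (fun e => hJpp (he.symm.trans e)),
        if_neg (fun e => hIJ (e.symm.trans he))]
  have hinj : ∀ i hi j hj, i ≠ j → col i hi ≠ col j hj := by
    intro i hi j hj hne
    rcases hcov' i hi with rfl | rfl | rfl <;> rcases hcov' j hj with rfl | rfl | rfl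
    · exact absurd rfl hne
    · rw [(cval _ hi).1 rfl, (cval _ hj).2.1 rfl]; exact Ne.symm hxq
    · rw [(cval _ hi).1 rfl, (cval _ hj).2.2 rfl]; exact Ne.symm hyq
    · rw [(cval _ hi).2.1 rfl, (cval _ hj).1 rfl]; exact hxq
    · exact absurd rfl hne
    · rw [(cval _ hi).2.1 rfl, (cval _ hj).2.2 rfl]; exact hxy'
    · rw [(cval _ hi).2.2 rfl, (cval _ hj).1 rfl]; exact hyq
    · rw [(cval _ hi).2.2 rfl, (cval _ hj).2.1 rfl]; exact Ne.symm hxy'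
    · exact absurd rfl hne
  have hch : ∀ (p : M.E × Bool) (h : M.itemAt (.inl p) = v), Chld M r v (oth M p) →
      ∃ ψE ψS, ψE p.1 = col (.inl p) h ∧
        (∀ w, Bel M r (oth M p) w → ProperAt M ψE ψS w) ∧
        (Bel M r (oth M p) (M.vinc ε₂) → ψS ε₂ = b) ∧
        (Bel M r (oth M p) (M.vinc ε₃) → ψS ε₃ = a) := by
    intro p h hc
    rcases hcov' (.inl p) h with he | he | he
    · exfalso
      have hpe : p = pp := Sum.inl.inj he
      rw [hpe] at hc
      have := hc.2; omega
    · have hok : Ok M r ε₂ ε₃ a b (oth M p) x := fitI.2.2 p he.symm hc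
      have hmlt : Nat.card M.V - M.graph.dist r (oth M p) < n := by
        have := hc.2; omega
      obtain ⟨ψE, ψS, hψ1, hψ2, hψ3, hψ4⟩ :=
        IH _ hmlt (oth M p) rfl (p.1, !p.2) (oth_swap M p.1 p.2).1
          (by rw [(oth_swap M p.1 p.2).2, h]; exact hc.2) x hok
      refine ⟨ψE, ψS, ?_, hψ2, hψ3, hψ4⟩
      rw [(cval _ h).2.1 he]
      exact hψ1
    · have hok : Ok M r ε₂ ε₃ a b (oth M p) y := fitJ.2.2 p he.symm hc
      have hmlt : Nat.card M.V - M.graph.dist r (oth M p) < n := by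
        have := hc.2; omega
      obtain ⟨ψE, ψS, hψ1, hψ2, hψ3, hψ4⟩ :=
        IH _ hmlt (oth M p) rfl (p.1, !p.2) (oth_swap M p.1 p.2).1
          (by rw [(oth_swap M p.1 p.2).2, h]; exact hc.2) y hok
      refine ⟨ψE, ψS, ?_, hψ2, hψ3, hψ4⟩
      rw [(cval _ h).2.2 he]
      exact hψ1
  obtain ⟨φE, φS, gA, gP, g2, g3⟩ := glue htree hloop hsimple r ε₂ ε₃ a b v col hinj hch
  refine ⟨φE, φS, ?_, gP, ?_, ?_⟩
  · have h0 := gA (.inl pp) hpp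
    have h1 : col (.inl pp) hpp = q := (cval _ hpp).1 rfl
    exact h0.trans h1
  · intro hB2
    by_cases hv2 : M.vinc ε₂ = v
    · have hat : M.itemAt (.inr ε₂) = v := hv2
      have h0 := gA (.inr ε₂) hat
      rcases hcov' (.inr ε₂) hat with he | he | he
      · exact absurd he (by simp)
      · exact (h0.trans ((cval _ hat).2.1 he)).trans (fitI.1 he.symm)
      · exact (h0.trans ((cval _ hat).2.2 he)).trans (fitJ.1 he.symm)
    · exact g2 hB2 hv2
  · intro hB3
    by_cases hv3 : M.vinc ε₃ = v
    · have hat : M.itemAt (.inr ε₃) = v := hv3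
      have h0 := gA (.inr ε₃) hat
      rcases hcov' (.inr ε₃) hat with he | he | he
      · exact absurd he (by simp)
      · exact (h0.trans ((cval _ hat).2.1 he)).trans (fitI.2.1 he.symm)
      · exact (h0.trans ((cval _ hat).2.2 he)).trans (fitJ.2.1 he.symm)
    · exact g3 hB3 hv3

end RecMain

/-- Let `T` be a tree multipole (cubic, no free edges, no loops or multiple edges, and the
underlying graph is a tree) with a Tait coloring, and let `ε₁, ε₂, ε₃` be three distinct
semiedges incident to vertices `v₁, v₂, v₃`. If `v₁ ≠ v₃` and it is not the case that
`d(v₁,v₂) = d(v₂,v₃) = 1`, then for any two distinct colors `a, b` there is a Tait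
coloring giving `ε₁, ε₂, ε₃` the colors `a, b, a`. -/
theorem tree_multipole_aba_state (M : Multipole) (hcubic : M.IsCubic)
    (hnoF : IsEmpty M.F)
    (hloopless : ∀ e : M.E, (M.ends e).1 ≠ (M.ends e).2)
    (hsimple : Function.Injective (fun e : M.E => s((M.ends e).1, (M.ends e).2)))
    (htree : M.graph.IsTree)
    (hTaitable : ∃ φE φS, M.IsTait φE φS)
    (ε₁ ε₂ ε₃ : M.S)
    (h12 : ε₁ ≠ ε₂) (h13 : ε₁ ≠ ε₃) (h23 : ε₂ ≠ ε₃)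
    (hv13 : M.vinc ε₁ ≠ M.vinc ε₃)
    (hmid : ¬(M.graph.dist (M.vinc ε₁) (M.vinc ε₂) = 1 ∧
              M.graph.dist (M.vinc ε₂) (M.vinc ε₃) = 1)) :
    ∀ a b : Fin 3, a ≠ b →
      ∃ φE φS, M.IsTait φE φS ∧ φS ε₁ = a ∧ φS ε₂ = b ∧ φS ε₃ = a := by
  classical
  intro a b hab
  set r := M.vinc ε₁ with hr
  have hv3r : M.vinc ε₃ ≠ r := fun e => hv13 e.symm
  have hε₁r : M.itemAt (.inr ε₁) = r := rfl
  obtain ⟨i₁, i₂, i₃, ha1, ha2, ha3, hi12, hi13, hi23, hcov⟩ := items3 hcubic r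
  obtain ⟨I, J, hIJ, hIe, hJe, hIat, hJat, hcov'⟩ :
      ∃ I J : M.Item, I ≠ J ∧ I ≠ .inr ε₁ ∧ J ≠ .inr ε₁ ∧
        M.itemAt I = r ∧ M.itemAt J = r ∧
        (∀ t, M.itemAt t = r → t = .inr ε₁ ∨ t = I ∨ t = J) := by
    rcases hcov (.inr ε₁) hε₁r with h | h | h
    · exact ⟨i₂, i₃, hi23, fun e => hi12 (h.symm ▸ e.symm), fun e => hi13 (h.symm ▸ e.symm),
        ha2, ha3, fun t ht => by rw [h]; exact hcov t ht⟩
    · refine ⟨i₁, i₃, hi13, fun e => hi12 (e.trans h), fun e => hi23 (e.trans h).symm,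
        ha1, ha3, fun t ht => ?_⟩
      rcases hcov t ht with h' | h' | h'
      · exact Or.inr (Or.inl h')
      · exact Or.inl (h'.trans h.symm)
      · exact Or.inr (Or.inr h')
    · refine ⟨i₁, i₂, hi12, fun e => hi13 (e.trans h), fun e => hi23 (e.trans h),
        ha1, ha2, fun t ht => ?_⟩
      rcases hcov t ht with h' | h' | h'
      · exact Or.inr (Or.inl h')
      · exact Or.inr (Or.inr h')
      · exact Or.inl (h'.trans h.symm)
  have hOkRoot : Ok M r ε₂ ε₃ a b r a := by
    refine ⟨fun _ => hab, fun h => absurd h hv3r, fun _ _ => Ne.symm (thrd_ne a b hab).1,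
      fun _ _ => rfl, fun h _ => absurd h hv3r, ?_, fun _ _ => hab⟩
    intro hch1 hch2
    exact absurd ⟨SimpleGraph.dist_eq_one_iff_adj.mpr hch1.1,
      SimpleGraph.dist_eq_one_iff_adj.mpr hch2.1⟩ hmid
  have hloc : ∀ p : M.E × Bool, M.itemAt (.inl p) = r → Chld M r r (oth M p) →
      (Sum.inl p : M.Item) = I ∨ (Sum.inl p : M.Item) = J := by
    intro p hp _
    rcases hcov' (.inl p) hp with he | he | he
    · exact absurd he (by simp)
    · exact Or.inl he
    · exact Or.inr he
  have hloc2 : M.vinc ε₂ = r → (Sum.inr ε₂ : M.Item) = I ∨ (Sum.inr ε₂ : M.Item) = J := by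
    intro e2
    rcases hcov' (.inr ε₂) (show M.itemAt (.inr ε₂) = r from e2) with he | he | he
    · exact absurd (Sum.inr.inj he) (fun e => h12 e.symm)
    · exact Or.inl he
    · exact Or.inr he
  have hloc3 : M.vinc ε₃ = r → (Sum.inr ε₃ : M.Item) = I ∨ (Sum.inr ε₃ : M.Item) = J := by
    intro e3
    rcases hcov' (.inr ε₃) (show M.itemAt (.inr ε₃) = r from e3) with he | he | he
    · exact absurd (Sum.inr.inj he) (fun e => h13 e.symm)
    · exact Or.inl he
    · exact Or.inr he
  obtain ⟨x, y, hxy', hxa, hya, fitI, fitJ⟩ :=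
    choose_xy htree hloopless hsimple r ε₂ ε₃ a b h23 hab hOkRoot hIJ hIat hJat
      hloc hloc2 hloc3
  set col : ∀ i : M.Item, M.itemAt i = r → Fin 3 :=
    fun t _ => if t = .inr ε₁ then a else if t = I then x else y with hcoldef
  have cval : ∀ (t : M.Item) (ht : M.itemAt t = r),
      (t = .inr ε₁ → col t ht = a) ∧ (t = I → col t ht = x) ∧ (t = J → col t ht = y) := by
    intro t ht
    refine ⟨?_, ?_, ?_⟩
    · intro he
      rw [hcoldef]; simp only
      rw [if_pos he]
    · intro he
      rw [hcoldef]; simp only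
      rw [if_neg (fun e => hIe (he.symm.trans e)), if_pos he]
    · intro he
      rw [hcoldef]; simp only
      rw [if_neg (fun e => hJe (he.symm.trans e)),
        if_neg (fun e => hIJ (e.symm.trans he))]
  have hinj : ∀ i hi j hj, i ≠ j → col i hi ≠ col j hj := by
    intro i hi j hj hne
    rcases hcov' i hi with rfl | rfl | rfl <;> rcases hcov' j hj with rfl | rfl | rfl
    · exact absurd rfl hne
    · rw [(cval _ hi).1 rfl, (cval _ hj).2.1 rfl]; exact Ne.symm hxa
    · rw [(cval _ hi).1 rfl, (cval _ hj).2.2 rfl]; exact Ne.symm hya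
    · rw [(cval _ hi).2.1 rfl, (cval _ hj).1 rfl]; exact hxa
    · exact absurd rfl hne
    · rw [(cval _ hi).2.1 rfl, (cval _ hj).2.2 rfl]; exact hxy'
    · rw [(cval _ hi).2.2 rfl, (cval _ hj).1 rfl]; exact hya
    · rw [(cval _ hi).2.2 rfl, (cval _ hj).2.1 rfl]; exact Ne.symm hxy'
    · exact absurd rfl hne
  have hch : ∀ (p : M.E × Bool) (h : M.itemAt (.inl p) = r), Chld M r r (oth M p) →
      ∃ ψE ψS, ψE p.1 = col (.inl p) h ∧
        (∀ w, Bel M r (oth M p) w → ProperAt M ψE ψS w) ∧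
        (Bel M r (oth M p) (M.vinc ε₂) → ψS ε₂ = b) ∧
        (Bel M r (oth M p) (M.vinc ε₃) → ψS ε₃ = a) := by
    intro p h hc
    rcases hloc p h hc with he | he
    · obtain ⟨ψE, ψS, hψ1, hψ2, hψ3, hψ4⟩ :=
        rec_color htree hloopless hsimple hcubic r ε₂ ε₃ a b h23 hab
          (Nat.card M.V - M.graph.dist r (oth M p)) (oth M p) rfl
          (p.1, !p.2) (oth_swap M p.1 p.2).1
          (by rw [(oth_swap M p.1 p.2).2, h]; exact hc.2) x (fitI.2.2 p he.symm hc)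
      refine ⟨ψE, ψS, ?_, hψ2, hψ3, hψ4⟩
      rw [(cval _ h).2.1 he]
      exact hψ1
    · obtain ⟨ψE, ψS, hψ1, hψ2, hψ3, hψ4⟩ :=
        rec_color htree hloopless hsimple hcubic r ε₂ ε₃ a b h23 hab
          (Nat.card M.V - M.graph.dist r (oth M p)) (oth M p) rfl
          (p.1, !p.2) (oth_swap M p.1 p.2).1
          (by rw [(oth_swap M p.1 p.2).2, h]; exact hc.2) y (fitJ.2.2 p he.symm hc)
      refine ⟨ψE, ψS, ?_, hψ2, hψ3, hψ4⟩
      rw [(cval _ h).2.2 he]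
      exact hψ1
  obtain ⟨φE, φS, gA, gP, g2, g3⟩ :=
    glue htree hloopless hsimple r ε₂ ε₃ a b r col hinj hch
  refine ⟨φE, φS, ?_, ?_, ?_, ?_⟩
  · intro i j hne hsame
    exact gP (M.itemAt i) (Bel_root M r _) i j rfl hsame.symm hne
  · exact (gA (.inr ε₁) hε₁r).trans ((cval _ hε₁r).1 rfl)
  · by_cases hv2 : M.vinc ε₂ = r
    · have hat : M.itemAt (.inr ε₂) = r := hv2
      rcases hloc2 hv2 with he | he
      · exact ((gA (.inr ε₂) hat).trans ((cval _ hat).2.1 he)).trans (fitI.1 he.symm)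
      · exact ((gA (.inr ε₂) hat).trans ((cval _ hat).2.2 he)).trans (fitJ.1 he.symm)
    · exact g2 (Bel_root M r _) hv2
  · exact g3 (Bel_root M r _) hv3r
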